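/- Let G be a connected finite simple graph on n ≥ 2 vertices and t ≥ 1 an integer such that the exact distance t-power G^{[#t]} is a regular graph. Let β_1 ≥ β_2 ≥ ... ≥ β_n be the adjacency eigenvalues of G^{[#t]}, and assume n − β_1 + β_2 > 0. Then eq_t(G) ≤ n · (1 + β_2) / (n − β_1 + β_2). -/

import Mathlib

open SimpleGraph

/-- `S` is a `t`-equidistant set of `G`: all distinct vertices of `S` are at distance
exactly `t` in `G`. -/
def IsEquidistantSet {V : Type*} (G : SimpleGraph V) (t : ℕ) (S : Finset V) : Prop :=
  (S : Set V).Pairwise fun u v => G.dist u v = t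

/-- The `t`-equidistant number of `G`: the maximum size of a `t`-equidistant set. -/
noncomputable def eqNum {V : Type*} [Fintype V] (G : SimpleGraph V) (t : ℕ) : ℕ :=
  sSup {n : ℕ | ∃ S : Finset V, IsEquidistantSet G t S ∧ S.card = n}

/-- `S` is a `t`-independent set of `G`: all distinct vertices of `S` are at pairwise
distance greater than `t` in `G`. -/
def IsTIndepSet {V : Type*} (G : SimpleGraph V) (t : ℕ) (S : Finset V) : Prop :=
  (S : Set V).Pairwise fun u v => t < G.dist u v

/-- The `t`-independence number of `G`. -/
noncomputable def indepNumT {V : Type*} [Fintype V] (G : SimpleGraph V) (t : ℕ) : ℕ :=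
  sSup {n : ℕ | ∃ S : Finset V, IsTIndepSet G t S ∧ S.card = n}

/-- The equidistant number of `G`: `max {eq_t(G) : 1 ≤ t ≤ diam G}`. -/
noncomputable def eqTotalNum {V : Type*} [Fintype V] (G : SimpleGraph V) : ℕ :=
  (Finset.Icc 1 G.diam).sup (eqNum G)

open scoped Classical

/-- The exact distance `t`-power of `G`: same vertex set, two distinct vertices adjacent iff
they are at distance exactly `t` in `G`. -/
def exactPower {V : Type*} (G : SimpleGraph V) (t : ℕ) : SimpleGraph V where
  Adj u v := u ≠ v ∧ G.dist u v = t
  symm := by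
    constructor
    intro u v h
    exact ⟨h.1.symm, by rw [SimpleGraph.dist_comm]; exact h.2⟩
  loopless := by
    constructor
    intro u h
    exact h.1 rfl

section HaemersAux

open Finset Matrix

variable {V : Type*} [Fintype V]

noncomputable def ip (x y : V → ℝ) : ℝ := ∑ v, x v * y v

lemma ip_comm (x y : V → ℝ) : ip x y = ip y x := by
  simp [ip, mul_comm]

lemma ip_smul_left (c : ℝ) (x y : V → ℝ) : ip (c • x) y = c * ip x y := by
  simp [ip, Finset.mul_sum, mul_assoc]

lemma ip_smul_right (c : ℝ) (x y : V → ℝ) : ip x (c • y) = c * ip x y := by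
  simp [ip, Finset.mul_sum]; congr 1; ext v; ring

lemma ip_sub_left (x y z : V → ℝ) : ip (x - y) z = ip x z - ip y z := by
  simp [ip, sub_mul, Finset.sum_sub_distrib]

lemma ip_sub_right (x y z : V → ℝ) : ip x (y - z) = ip x y - ip x z := by
  simp [ip, mul_sub, Finset.sum_sub_distrib]

lemma inner_eq_ip (x y : EuclideanSpace ℝ V) : (inner ℝ x y : ℝ) = ip ⇑x ⇑y := by
  simp [ip, PiLp.inner_apply, RCLike.inner_apply, mul_comm]

lemma parseval (b : OrthonormalBasis V ℝ (EuclideanSpace ℝ V)) (x y : V → ℝ) :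
    ip x y = ∑ i, ip (⇑(b i)) x * ip (⇑(b i)) y := by
  have h := b.sum_inner_mul_inner ((WithLp.equiv 2 _).symm x) ((WithLp.equiv 2 _).symm y)
  simp only [inner_eq_ip, WithLp.equiv_symm_apply, WithLp.ofLp_toLp] at h
  rw [← h]
  exact Finset.sum_congr rfl fun i _ => by rw [ip_comm x]

lemma ip_mulVec_comm (A : Matrix V V ℝ) (hA : A.IsHermitian) (x y : V → ℝ) :
    ip (A *ᵥ x) y = ip x (A *ᵥ y) := by
  have hsym : ∀ u v, A u v = A v u := fun u v => by
    have := hA.apply u v; simpa using this.symm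
  calc ip (A *ᵥ x) y = ∑ v, ∑ u, A v u * x u * y v := by
        simp [ip, Matrix.mulVec, dotProduct, Finset.sum_mul]
    _ = ∑ u, ∑ v, A v u * x u * y v := Finset.sum_comm
    _ = ip x (A *ᵥ y) := by
        simp only [ip, Matrix.mulVec, dotProduct, Finset.mul_sum]
        apply Finset.sum_congr rfl; intro u _
        apply Finset.sum_congr rfl; intro v _
        rw [hsym v u]; ring

lemma quad_form (A : Matrix V V ℝ) (hA : A.IsHermitian) (lam : V → ℝ)
    (b : OrthonormalBasis V ℝ (EuclideanSpace ℝ V))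
    (hb : ∀ i, A *ᵥ ⇑(b i) = lam i • ⇑(b i)) (x : V → ℝ) :
    ip x (A *ᵥ x) = ∑ i, lam i * (ip (⇑(b i)) x)^2 := by
  rw [parseval b x (A *ᵥ x)]
  apply Finset.sum_congr rfl; intro i _
  rw [← ip_mulVec_comm A hA, hb i, ip_smul_left, ip_comm _ x]; ring

lemma norm_form (b : OrthonormalBasis V ℝ (EuclideanSpace ℝ V)) (x : V → ℝ) :
    ip x x = ∑ i, (ip (⇑(b i)) x)^2 := by
  rw [parseval b x x]
  exact Finset.sum_congr rfl fun i _ => (sq _).symm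

end HaemersAux

open Finset Matrix

/-- Let `G` be connected on `n ≥ 2` vertices, `t ≥ 1`, with `G^{[#t]}`
regular, and let `β_1 ≥ ⋯ ≥ β_n` be the adjacency eigenvalues of `G^{[#t]}`. If
`n - β_1 + β_2 > 0` then `eq_t(G) ≤ n (1 + β_2) / (n - β_1 + β_2)`. -/
theorem eqNum_le_haemers_clique_bound {V : Type*} [Fintype V] (G : SimpleGraph V)
    (hG : G.Connected) (n : ℕ) (hn : Fintype.card V = n) (hn2 : 2 ≤ n)
    (t : ℕ) (ht : 1 ≤ t)
    (hreg : ∃ r : ℕ, ∀ v : V, ((exactPower G t).neighborSet v).ncard = r)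
    (hB : ((exactPower G t).adjMatrix ℝ).IsHermitian)
    (β : Fin n → ℝ) (hanti : Antitone β)
    (hlist : ∃ e : Fin n ≃ V, ∀ i, β i = hB.eigenvalues (e i))
    (hpos : (0 : ℝ) < n - β ⟨0, by omega⟩ + β ⟨1, by omega⟩) :
    (eqNum G t : ℝ) ≤
      n * (1 + β ⟨1, by omega⟩) / (n - β ⟨0, by omega⟩ + β ⟨1, by omega⟩) := by
  classical
  obtain ⟨e, he⟩ := hlist
  obtain ⟨r, hr⟩ := hreg
  have h0 : 0 < n := by omega
  have h1 : 1 < n := by omega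
  have hV : Nonempty V := Fintype.card_pos_iff.mp (by omega)
  have hn0 : (0:ℝ) < n := by exact_mod_cast h0
  set A := (exactPower G t).adjMatrix ℝ with hAdef
  set b := hB.eigenvectorBasis with hbdef
  set lam := hB.eigenvalues with hlamdef
  have hb : ∀ i, A *ᵥ ⇑(b i) = lam i • ⇑(b i) := fun i => hB.mulVec_eigenvectorBasis i
  have hlam : ∀ i, lam i = β (e.symm i) := fun i => by rw [he (e.symm i), e.apply_symm_apply]
  have hlam_le : ∀ i, lam i ≤ β ⟨0, h0⟩ := fun i => by
    rw [hlam i]; exact hanti (by simp [Fin.le_def])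
  -- nonnegativity of entries and row sums
  have hAnn : ∀ u v, 0 ≤ A u v := by
    intro u v
    rw [hAdef]
    simp only [SimpleGraph.adjMatrix_apply]
    split <;> norm_num
  have hdeg : ∀ v, ∑ u, A v u = (r:ℝ) := by
    intro v
    have h1' : ∑ u, A v u = (((exactPower G t).neighborFinset v).card : ℝ) := by
      rw [hAdef]
      simp only [SimpleGraph.adjMatrix_apply]
      rw [Finset.sum_boole]
      congr 2
      ext u
      simp [SimpleGraph.neighborFinset_def]
    have h2' : ((exactPower G t).neighborFinset v).card = r := by
      rw [← hr v, SimpleGraph.neighborFinset_def, Set.ncard_eq_toFinset_card']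
    rw [h1', h2']
  -- all-ones vector
  set w : V → ℝ := fun _ => 1 with hwdef
  have hAw : A *ᵥ w = (r:ℝ) • w := by
    funext v
    have : (A *ᵥ w) v = ∑ u, A v u := by
      simp [Matrix.mulVec, dotProduct, hwdef]
    rw [this, hdeg v]
    simp [hwdef]
  have hww : ip w w = (n:ℝ) := by
    simp [ip, hwdef, hn]
  -- Perron bound: every eigenvalue is at most r
  have hperron : ∀ i, lam i ≤ (r:ℝ) := by
    intro i
    have hu0 : (⇑(b i) : V → ℝ) ≠ 0 := by
      intro h
      exact b.orthonormal.ne_zero i (by ext v; exact congrFun h v)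
    obtain ⟨j, -, hj⟩ := Finset.exists_max_image Finset.univ (fun v => |(b i) v|)
      Finset.univ_nonempty
    have hupos : 0 < |(b i) j| := by
      rcases Function.ne_iff.mp hu0 with ⟨k, hk⟩
      exact lt_of_lt_of_le (abs_pos.mpr hk) (hj k (Finset.mem_univ k))
    have heig : (A *ᵥ ⇑(b i)) j = lam i * (b i) j := by rw [hb i]; simp
    have hineq : lam i * |(b i) j| ≤ (r:ℝ) * |(b i) j| := by
      calc lam i * |(b i) j| ≤ |lam i * (b i) j| := by
            rw [abs_mul]; exact mul_le_mul_of_nonneg_right (le_abs_self _) (abs_nonneg _)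
        _ = |(A *ᵥ ⇑(b i)) j| := by rw [heig]
        _ = |∑ u, A j u * (b i) u| := by simp [Matrix.mulVec, dotProduct]
        _ ≤ ∑ u, |A j u * (b i) u| := Finset.abs_sum_le_sum_abs _ _
        _ = ∑ u, A j u * |(b i) u| := by
            apply Finset.sum_congr rfl; intro u _
            rw [abs_mul, abs_of_nonneg (hAnn j u)]
        _ ≤ ∑ u, A j u * |(b i) j| :=
            Finset.sum_le_sum fun u _ =>
              mul_le_mul_of_nonneg_left (hj u (Finset.mem_univ u)) (hAnn j u)
        _ = (r:ℝ) * |(b i) j| := by rw [← Finset.sum_mul, hdeg j]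
    exact le_of_mul_le_mul_right hineq hupos
  -- Rayleigh bound: r ≤ β₁
  have hray : (r:ℝ) ≤ β ⟨0, h0⟩ := by
    have h1' : ip w (A *ᵥ w) = (r:ℝ) * n := by rw [hAw, ip_smul_right, hww]
    have h2' : ip w (A *ᵥ w) = ∑ i, lam i * (ip (⇑(b i)) w)^2 := quad_form A hB lam b hb w
    have h3' : ∑ i, lam i * (ip (⇑(b i)) w)^2 ≤ ∑ i, β ⟨0, h0⟩ * (ip (⇑(b i)) w)^2 :=
      Finset.sum_le_sum fun i _ => mul_le_mul_of_nonneg_right (hlam_le i) (sq_nonneg _)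
    have h4' : ∑ i, β ⟨0, h0⟩ * (ip (⇑(b i)) w)^2 = β ⟨0, h0⟩ * (n:ℝ) := by
      rw [← Finset.mul_sum, ← norm_form b w, hww]
    have : (r:ℝ) * n ≤ β ⟨0, h0⟩ * n := by
      rw [← h1']; rw [h2']; rw [← h4']; exact h3'
    exact le_of_mul_le_mul_right this hn0
  have hr1 : (r:ℝ) = β ⟨0, h0⟩ :=
    le_antisymm hray (by rw [he ⟨0, h0⟩]; exact hperron _)
  -- extract a maximum equidistant set
  have hbdd : BddAbove {m : ℕ | ∃ S : Finset V, IsEquidistantSet G t S ∧ S.card = m} := by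
    refine ⟨Fintype.card V, fun m hm => ?_⟩
    obtain ⟨S, -, hc⟩ := hm
    exact hc ▸ S.card_le_univ
  have hne : {m : ℕ | ∃ S : Finset V, IsEquidistantSet G t S ∧ S.card = m}.Nonempty :=
    ⟨0, ∅, by simp [IsEquidistantSet], by simp⟩
  have hmem := Nat.sSup_mem hne hbdd
  obtain ⟨S, hS, hScard⟩ := hmem
  have hs1 : 1 ≤ eqNum G t := by
    obtain ⟨v⟩ := hV
    exact le_csSup hbdd ⟨{v}, by simp [IsEquidistantSet], by simp⟩
  -- indicator vector
  set χ : V → ℝ := fun v => if v ∈ S then (1:ℝ) else 0 with hχdef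
  have hchi_sq : ∀ v, χ v * χ v = χ v := fun v => by
    by_cases h : v ∈ S <;> simp [hχdef, h]
  have hchisum : ∑ v, χ v = (S.card : ℝ) := by
    rw [hχdef]; rw [Finset.sum_boole]; congr 1; simp
  have hchichi : ip χ χ = (S.card : ℝ) := by
    rw [show ip χ χ = ∑ v, χ v from Finset.sum_congr rfl fun v _ => hchi_sq v, hchisum]
  have hwchi : ip w χ = (S.card : ℝ) := by
    rw [show ip w χ = ∑ v, χ v from Finset.sum_congr rfl fun v _ => one_mul _, hchisum]
  have hchiw : ip χ w = (S.card : ℝ) := by rw [ip_comm]; exact hwchi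
  -- quadratic form of the indicator
  have hchiA : ip χ (A *ᵥ χ) = (S.card:ℝ) * ((S.card:ℝ) - 1) := by
    have key : ∀ v ∈ S, (A *ᵥ χ) v = (S.card:ℝ) - 1 := by
      intro v hv
      have hcpos : 1 ≤ S.card := Finset.card_pos.mpr ⟨v, hv⟩
      have e1 : (A *ᵥ χ) v = ∑ u, (if u ∈ S then A v u else 0) := by
        simp only [Matrix.mulVec, dotProduct, hχdef]
        apply Finset.sum_congr rfl; intro u _
        split <;> simp
      have e2 : ∑ u, (if u ∈ S then A v u else 0) = ∑ u ∈ S, A v u := by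
        rw [Finset.sum_ite_mem, Finset.univ_inter]
      have e3 : ∑ u ∈ S, A v u = ((S.erase v).card : ℝ) := by
        have : ∀ u ∈ S, A v u = if (exactPower G t).Adj v u then (1:ℝ) else 0 :=
          fun u _ => by rw [hAdef]; simp [SimpleGraph.adjMatrix_apply]
        rw [Finset.sum_congr rfl this, Finset.sum_boole]
        congr 2
        ext u
        simp only [Finset.mem_filter, Finset.mem_erase]
        constructor
        · rintro ⟨hu, hadj⟩
          exact ⟨fun h => hadj.1 h.symm, hu⟩
        · rintro ⟨hne', hu⟩
          refine ⟨hu, ⟨fun h => hne' h.symm, ?_⟩⟩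
          exact hS hv hu (fun h => hne' h.symm)
      rw [e1, e2, e3, Finset.card_erase_of_mem hv, Nat.cast_sub hcpos, Nat.cast_one]
    have e4 : ip χ (A *ᵥ χ) = ∑ v, (if v ∈ S then (A *ᵥ χ) v else 0) := by
      simp only [ip, hχdef]
      apply Finset.sum_congr rfl; intro v _
      split <;> simp
    rw [e4, Finset.sum_ite_mem, Finset.univ_inter,
      Finset.sum_congr rfl key, Finset.sum_const, nsmul_eq_mul]
  -- the test vector z
  set z : V → ℝ := (n:ℝ) • χ - (S.card:ℝ) • w with hzdef
  have hwz : ip w z = 0 := by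
    rw [hzdef, ip_sub_right, ip_smul_right, ip_smul_right, hwchi, hww]; ring
  have hchiz : ip χ z = (n:ℝ) * (S.card:ℝ) - (S.card:ℝ) * (S.card:ℝ) := by
    rw [hzdef, ip_sub_right, ip_smul_right, ip_smul_right, hchichi, hchiw]
  have hzz : ip z z = (n:ℝ)^2 * (S.card:ℝ) - (n:ℝ) * (S.card:ℝ)^2 := by
    have e' := ip_sub_left ((n:ℝ) • χ) ((S.card:ℝ) • w) z
    rw [← hzdef] at e'
    rw [e', ip_smul_left, ip_smul_left, hchiz, hwz]
    ring
  have hwAchi : ip w (A *ᵥ χ) = (r:ℝ) * (S.card:ℝ) := by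
    rw [← ip_mulVec_comm A hB, hAw, ip_smul_left, hwchi]
  have hzAchi : ip z (A *ᵥ χ) =
      (n:ℝ) * ((S.card:ℝ) * ((S.card:ℝ) - 1)) - (S.card:ℝ) * ((r:ℝ) * (S.card:ℝ)) := by
    rw [hzdef, ip_sub_left, ip_smul_left, ip_smul_left, hchiA, hwAchi]
  have hzw : ip z w = 0 := by rw [ip_comm]; exact hwz
  have hzAz : ip z (A *ᵥ z) =
      (n:ℝ)^2 * (S.card:ℝ) * ((S.card:ℝ) - 1) - (n:ℝ) * (S.card:ℝ)^2 * (r:ℝ) := by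
    have hAz : A *ᵥ z = (n:ℝ) • (A *ᵥ χ) - ((S.card:ℝ) * (r:ℝ)) • w := by
      rw [hzdef, Matrix.mulVec_sub, Matrix.mulVec_smul, Matrix.mulVec_smul, hAw, smul_smul]
    rw [hAz, ip_sub_right, ip_smul_right, ip_smul_right, hzAchi, hzw]
    ring
  -- the eigenvalue dichotomy
  have hdisj : ∀ i, lam i ≤ β ⟨1, h1⟩ ∨ ip (⇑(b i)) z = 0 := by
    intro i
    rcases Nat.eq_zero_or_pos (e.symm i).val with h0v | h1v
    · have hlami : lam i = β ⟨0, h0⟩ := by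
        rw [hlam i]; congr 1; exact Fin.ext h0v
      by_cases hcase : β ⟨0, h0⟩ ≤ β ⟨1, h1⟩
      · left; rw [hlami]; exact hcase
      · right
        push_neg at hcase
        have hie : i = e ⟨0, h0⟩ := by
          rw [← e.apply_symm_apply i]; congr 1; exact Fin.ext h0v
        have hck : ∀ k, (lam k - (r:ℝ)) * ip (⇑(b k)) w = 0 := by
          intro k
          have a1 : ip (⇑(b k)) (A *ᵥ w) = (r:ℝ) * ip (⇑(b k)) w := by
            rw [hAw, ip_smul_right]
          have a2 : ip (⇑(b k)) (A *ᵥ w) = lam k * ip (⇑(b k)) w := by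
            rw [← ip_mulVec_comm A hB, hb k, ip_smul_left]
          rw [sub_mul]; rw [← a2, a1]; ring
        have hco : ∀ k, k ≠ i → ip (⇑(b k)) w = 0 := by
          intro k hk
          have hkv : 1 ≤ (e.symm k).val := by
            rcases Nat.eq_zero_or_pos (e.symm k).val with hzero | hpos'
            · exfalso; apply hk
              rw [hie, ← e.apply_symm_apply k]
              congr 1; exact Fin.ext (by simpa using hzero)
            · exact hpos'
          have hlt : lam k < (r:ℝ) := by
            rw [hlam k, hr1]
            exact lt_of_le_of_lt
              (hanti (show (⟨1, h1⟩ : Fin n) ≤ e.symm k by rw [Fin.le_def]; exact hkv)) hcase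
          rcases mul_eq_zero.mp (hck k) with hzero | hzero
          · exact absurd hzero (sub_ne_zero.mpr (ne_of_lt hlt))
          · exact hzero
        have hci : ip (⇑(b i)) w ≠ 0 := by
          intro hzero
          have hzero' : ip w w = 0 := by
            rw [norm_form b w]
            apply Finset.sum_eq_zero; intro k _
            by_cases hk : k = i
            · rw [hk, hzero]; ring
            · rw [hco k hk]; ring
          rw [hww] at hzero'
          linarith
        have hpar : (0:ℝ) = ∑ k, ip (⇑(b k)) w * ip (⇑(b k)) z := by
          rw [← parseval b w z, hwz]
        have hsingle : ∑ k, ip (⇑(b k)) w * ip (⇑(b k)) z =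
            ip (⇑(b i)) w * ip (⇑(b i)) z := by
          apply Finset.sum_eq_single i
          · intro k _ hk; rw [hco k hk]; ring
          · intro habs; exact absurd (Finset.mem_univ i) habs
        rw [hsingle] at hpar
        rcases mul_eq_zero.mp hpar.symm with hzero | hzero
        · exact absurd hzero hci
        · exact hzero
    · left
      rw [hlam i]
      exact hanti (show (⟨1, h1⟩ : Fin n) ≤ e.symm i by rw [Fin.le_def]; exact h1v)
  -- the quadratic form bound for z
  have hbound : ip z (A *ᵥ z) ≤ β ⟨1, h1⟩ * ip z z := by
    calc ip z (A *ᵥ z) = ∑ i, lam i * (ip (⇑(b i)) z)^2 := quad_form A hB lam b hb z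
      _ ≤ ∑ i, β ⟨1, h1⟩ * (ip (⇑(b i)) z)^2 := by
          apply Finset.sum_le_sum; intro i _
          rcases hdisj i with hle | hzero
          · exact mul_le_mul_of_nonneg_right hle (sq_nonneg _)
          · rw [hzero]; simp
      _ = β ⟨1, h1⟩ * ip z z := by rw [← Finset.mul_sum, norm_form b z]
  -- put it together
  rw [hzAz, hzz, hr1] at hbound
  have hscast : (S.card : ℝ) = (eqNum G t : ℝ) := by exact_mod_cast congrArg Nat.cast hScard
  have hs1R : (1:ℝ) ≤ (eqNum G t : ℝ) := by exact_mod_cast hs1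
  rw [hscast] at hbound
  rw [le_div_iff₀ hpos]
  nlinarith [hbound, mul_pos hn0 (lt_of_lt_of_le one_pos hs1R), hn0, hs1R]
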